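/- Let D ∈ ℕ, and let p_1, ..., p_m be distinct primes with p_i ≥ D + 3 for all i. Set b^i = e^{2πi/p_i} and let b̃^i = Σ_{j=1}^i a^i_j b^j with a^i_j ∈ ℚ and a^i_i ≠ 0. Then for every nonzero polynomial g ∈ ℚ[Y_1,...,Y_m] of total degree at most D, g(b̃^1, ..., b̃^m) ≠ 0. -/

import Mathlib

open Complex IntermediateField Module

noncomputable def ZZ (n : ℕ) : ℂ := Complex.exp (2 * Real.pi * Complex.I / n)

lemma ZZ_prim {n : ℕ} (hn : n ≠ 0) : IsPrimitiveRoot (ZZ n) n :=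
  Complex.isPrimitiveRoot_exp n hn

lemma ZZ_ne_zero (n : ℕ) : ZZ n ≠ 0 := Complex.exp_ne_zero _

lemma ZZ_one : ZZ 1 = 1 := by
  simp [ZZ, Complex.exp_two_pi_mul_I]

lemma ZZ_integral {n : ℕ} (hn : n ≠ 0) : IsIntegral ℚ (ZZ n) :=
  ((ZZ_prim hn).isIntegral (Nat.pos_of_ne_zero hn)).tower_top

lemma ZZ_pow {d e : ℕ} (hd : d ≠ 0) (he : e ≠ 0) : ZZ (d * e) ^ e = ZZ d := by
  rw [ZZ, ZZ, ← Complex.exp_nat_mul]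
  congr 1
  have hd' : (d : ℂ) ≠ 0 := Nat.cast_ne_zero.2 hd
  have he' : (e : ℂ) ≠ 0 := Nat.cast_ne_zero.2 he
  push_cast
  field_simp

noncomputable def KK (S : Finset ℕ) : IntermediateField ℚ ℂ :=
  IntermediateField.adjoin ℚ (ZZ '' S)

lemma mem_KK {S : Finset ℕ} {r : ℕ} (hr : r ∈ S) : ZZ r ∈ KK S :=
  IntermediateField.subset_adjoin _ _ ⟨r, by simpa using hr, rfl⟩

lemma KK_mono {S T : Finset ℕ} (h : S ⊆ T) : KK S ≤ KK T :=
  IntermediateField.adjoin.mono _ _ _ (Set.image_mono (by exact_mod_cast h))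

lemma KK_eq (S : Finset ℕ) (hS : ∀ r ∈ S, r.Prime) :
    KK S = ℚ⟮ZZ (∏ r ∈ S, r)⟯ := by
  classical
  revert hS
  induction S using Finset.induction_on with
  | empty =>
    intro _
    rw [KK]
    simp [ZZ_one, IntermediateField.adjoin_one]
  | @insert q S hqS ih =>
    intro hS
    have hq : q.Prime := hS q (Finset.mem_insert_self q S)
    have hS' : ∀ r ∈ S, r.Prime := fun r hr => hS r (Finset.mem_insert_of_mem hr)
    have ih' := ih hS'
    set N : ℕ := ∏ r ∈ S, r with hN
    have hq0 : q ≠ 0 := hq.ne_zero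
    have hN0 : N ≠ 0 := Finset.prod_ne_zero_iff.2 fun r hr => (hS' r hr).ne_zero
    have hcop : Nat.Coprime q N :=
      Nat.Coprime.prod_right fun r hr =>
        (Nat.coprime_primes hq (hS' r hr)).2 (by rintro rfl; exact hqS hr)
    rw [Finset.prod_insert hqS]
    have e1 : ZZ (q * N) ^ N = ZZ q := ZZ_pow hq0 hN0
    have e2 : ZZ (q * N) ^ q = ZZ N := by
      rw [mul_comm q N]; exact ZZ_pow hN0 hq0
    apply le_antisymm
    · rw [KK, IntermediateField.adjoin_le_iff]
      rintro x ⟨r, hr, rfl⟩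
      simp only [Finset.coe_insert, Set.mem_insert_iff, Finset.mem_coe] at hr
      rcases hr with h | hr
      · rw [h]
        exact e1 ▸ pow_mem (mem_adjoin_simple_self ℚ (ZZ (q * N))) N
      · have : ZZ r ∈ ℚ⟮ZZ N⟯ := ih' ▸ mem_KK hr
        have hle : ℚ⟮ZZ N⟯ ≤ ℚ⟮ZZ (q * N)⟯ :=
          adjoin_simple_le_iff.2 (e2 ▸ pow_mem (mem_adjoin_simple_self ℚ (ZZ (q * N))) q)
        exact hle this
    · rw [adjoin_simple_le_iff]
      have hqmem : ZZ q ∈ KK (insert q S) := mem_KK (Finset.mem_insert_self q S)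
      have hNmem : ZZ N ∈ KK (insert q S) := by
        have : ZZ N ∈ ℚ⟮ZZ N⟯ := mem_adjoin_simple_self ℚ (ZZ N)
        rw [← ih'] at this
        exact KK_mono (Finset.subset_insert q S) this
      obtain ⟨u, v, huv⟩ : IsCoprime (q : ℤ) (N : ℤ) := Nat.isCoprime_iff_coprime.2 hcop
      have key : ZZ (q * N) = (ZZ N) ^ u * (ZZ q) ^ v := by
        have hz : ZZ (q * N) ≠ 0 := ZZ_ne_zero _
        calc ZZ (q * N) = ZZ (q * N) ^ (u * q + v * N : ℤ) := by rw [huv, zpow_one]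
        _ = (ZZ N) ^ u * (ZZ q) ^ v := by
            rw [zpow_add₀ hz, mul_comm u (q : ℤ), mul_comm v (N : ℤ), zpow_mul, zpow_mul,
              zpow_natCast, zpow_natCast, e1, e2]
      rw [key]
      exact mul_mem (zpow_mem hNmem u) (zpow_mem hqmem v)

lemma finrank_adjoin_ZZ {n : ℕ} (hn : n ≠ 0) :
    finrank ℚ ℚ⟮ZZ n⟯ = n.totient := by
  rw [IntermediateField.adjoin.finrank (ZZ_integral hn),
    ← Polynomial.cyclotomic_eq_minpoly_rat (ZZ_prim hn) (Nat.pos_of_ne_zero hn),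
    Polynomial.natDegree_cyclotomic]

lemma prod_ne_zero (S : Finset ℕ) (hS : ∀ r ∈ S, r.Prime) : (∏ r ∈ S, r) ≠ 0 :=
  Finset.prod_ne_zero_iff.2 fun r hr => (hS r hr).ne_zero

lemma finrank_KK (S : Finset ℕ) (hS : ∀ r ∈ S, r.Prime) :
    finrank ℚ (KK S) = (∏ r ∈ S, r).totient := by
  rw [KK_eq S hS, finrank_adjoin_ZZ (prod_ne_zero S hS)]

lemma KK_fd (S : Finset ℕ) (hS : ∀ r ∈ S, r.Prime) : FiniteDimensional ℚ (KK S) := by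
  rw [KK_eq S hS]
  exact IntermediateField.adjoin.finiteDimensional (ZZ_integral (prod_ne_zero S hS))


lemma aeval_finSuccEquiv {m : ℕ} (f : MvPolynomial (Fin (m + 1)) ℚ) (tb : Fin (m + 1) → ℂ) :
    MvPolynomial.aeval tb f =
      Polynomial.eval (tb 0) (Polynomial.map
        (MvPolynomial.aeval (fun i => tb i.succ) : MvPolynomial (Fin m) ℚ →ₐ[ℚ] ℂ).toRingHom
        (MvPolynomial.finSuccEquiv ℚ m f)) := by
  have h : (MvPolynomial.aeval tb : MvPolynomial (Fin (m + 1)) ℚ →ₐ[ℚ] ℂ).toRingHom =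
      (Polynomial.evalRingHom (tb 0)).comp
        ((Polynomial.mapRingHom
            (MvPolynomial.aeval (fun i => tb i.succ) : MvPolynomial (Fin m) ℚ →ₐ[ℚ] ℂ).toRingHom).comp
          (MvPolynomial.finSuccEquiv ℚ m : MvPolynomial (Fin (m + 1)) ℚ →+* _)) := by
    apply MvPolynomial.ringHom_ext
    · intro r
      simp [MvPolynomial.finSuccEquiv_apply]
    · intro i
      refine Fin.cases ?_ ?_ i
      · simp [MvPolynomial.finSuccEquiv_X_zero]
      · intro j
        simp [MvPolynomial.finSuccEquiv_X_succ]
  exact DFunLike.congr_fun h f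

lemma Ici_succ_eq {m : ℕ} (i : Fin m) :
    Finset.Ici (Fin.succ i) = (Finset.Ici i).map ⟨Fin.succ, Fin.succ_injective m⟩ := by
  ext j
  simp only [Finset.mem_map, Finset.mem_Ici, Function.Embedding.coeFn_mk]
  constructor
  · intro hj
    have hj0 : j ≠ 0 := by
      intro h
      rw [h] at hj
      exact absurd hj (by simp [Fin.le_def])
    refine ⟨j.pred hj0, ?_, Fin.succ_pred j hj0⟩
    rw [← Fin.succ_le_succ_iff, Fin.succ_pred]
    exact hj
  · rintro ⟨k, hk, rfl⟩
    exact Fin.succ_le_succ_iff.mpr hk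

lemma sum_Iic_rev {M : Type*} [AddCommMonoid M] {m : ℕ} (i : Fin m) (f : Fin m → M) :
    ∑ j ∈ Finset.Iic (Fin.rev i), f j = ∑ k ∈ Finset.Ici i, f (Fin.rev k) := by
  apply Finset.sum_nbij' (fun j => Fin.rev j) (fun k => Fin.rev k) <;>
    simp [Fin.rev_le_rev, Fin.le_rev_iff, Fin.rev_rev]

theorem main' (D : ℕ) : ∀ (m : ℕ) (p : Fin m → ℕ), (∀ i, (p i).Prime) → Function.Injective p →
    (∀ i, D + 3 ≤ p i) → ∀ (a : Fin m → Fin m → ℚ), (∀ i, a i i ≠ 0) →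
    ∀ (tb : Fin m → ℂ), (∀ i, tb i = ∑ j ∈ Finset.Ici i, (a i j : ℂ) * ZZ (p j)) →
    ∀ (g : MvPolynomial (Fin m) ℚ), g ≠ 0 → g.totalDegree ≤ D →
    MvPolynomial.aeval tb g ≠ 0 := by
  intro m
  induction m with
  | zero =>
    intro p _ _ _ a _ tb _ g hg _
    have hgc : g = MvPolynomial.C (g.coeff 0) := MvPolynomial.eq_C_of_isEmpty g
    rw [hgc, MvPolynomial.aeval_C]
    intro h
    have h0 : g.coeff 0 = 0 := (algebraMap ℚ ℂ).injective (by simpa using h)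
    exact hg (by rw [hgc, h0, map_zero])
  | succ m IH =>
    intro p hp hinj hge a ha tb htb g hg hdeg
    classical
    set q : ℕ := p 0 with hqdef
    have hq : q.Prime := hp 0
    have hq0 : q ≠ 0 := hq.ne_zero
    set S : Finset ℕ := Finset.image (fun i : Fin m => p i.succ) Finset.univ with hSdef
    have hSprime : ∀ r ∈ S, r.Prime := by
      intro r hr
      rw [hSdef, Finset.mem_image] at hr
      obtain ⟨i, _, rfl⟩ := hr
      exact hp _
    have hqS : q ∉ S := by
      rw [hSdef, Finset.mem_image]
      rintro ⟨i, _, hi⟩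
      exact Fin.succ_ne_zero i (hinj hi)
    set K := KK S with hK
    have hfd : FiniteDimensional ℚ K := KK_fd S hSprime
    set L := KK (insert q S) with hL
    have hprime' : ∀ r ∈ insert q S, r.Prime := by
      intro r hr
      rcases Finset.mem_insert.1 hr with rfl | hr
      · exact hq
      · exact hSprime r hr
    have hfdL : FiniteDimensional ℚ L := KK_fd _ hprime'
    have hKL : K ≤ L := KK_mono (Finset.subset_insert q S)
    have hNS0 : (∏ r ∈ S, r) ≠ 0 := Finset.prod_ne_zero_iff.2 fun r hr => (hSprime r hr).ne_zero
    have hcop : Nat.Coprime q (∏ r ∈ S, r) :=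
      Nat.Coprime.prod_right fun r hr =>
        (Nat.coprime_primes hq (hSprime r hr)).2 (by rintro rfl; exact hqS hr)
    -- memberships
    have hratmem : ∀ (x : ℚ) (M : IntermediateField ℚ ℂ), (x : ℂ) ∈ M := by
      intro x M
      have := M.algebraMap_mem x
      rwa [eq_ratCast (algebraMap ℚ ℂ) x] at this
    have hmemZ : ∀ i : Fin m, ZZ (p i.succ) ∈ K :=
      fun i => mem_KK (by rw [hSdef, Finset.mem_image]; exact ⟨i, Finset.mem_univ i, rfl⟩)
    have hmemtb : ∀ i : Fin m, tb i.succ ∈ K := by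
      intro i
      rw [htb i.succ, Ici_succ_eq i, Finset.sum_map]
      exact sum_mem fun j _ => mul_mem (hratmem _ _) (hmemZ j)
    -- decomposition of tb 0
    have hIci0 : Finset.Ici (0 : Fin (m + 1)) = Finset.univ := by
      ext j; simp [Fin.zero_le]
    set c : ℂ := ∑ i : Fin m, (a 0 i.succ : ℂ) * ZZ (p i.succ) with hc
    have hcK : c ∈ K := sum_mem fun j _ => mul_mem (hratmem _ _) (hmemZ j)
    have ht_eq : tb 0 = (a 0 0 : ℂ) * ZZ q + c := by
      rw [htb 0, hIci0, Fin.sum_univ_succ, hc, hqdef]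
    set t : ℂ := tb 0 with ht
    have ha00 : (a 0 0 : ℂ) ≠ 0 := by exact_mod_cast ha 0
    have hζq_eq : ZZ q = (a 0 0 : ℂ)⁻¹ * (t - c) := by
      rw [ht_eq]; field_simp; ring
    have hζqL : ZZ q ∈ L := mem_KK (Finset.mem_insert_self q S)
    have htL : t ∈ L := by
      rw [ht_eq]
      exact add_mem (mul_mem (hratmem _ _) hζqL) (hKL hcK)
    have htint : IsIntegral ℚ t := by
      have h1 : IsIntegral ℚ (⟨t, htL⟩ : L) := IsIntegral.of_finite ℚ _
      have := h1.map (L.val)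
      simpa using this
    have htK : IsIntegral K t := htint.tower_top
    -- field computation
    have hLeq : IntermediateField.restrictScalars ℚ (IntermediateField.adjoin K {t}) = L := by
      erw [IntermediateField.restrictScalars_adjoin_eq_sup]
      have hLsup : L = K ⊔ ℚ⟮ZZ q⟯ := by
        simp only [hL, hK, KK]
        rw [Finset.coe_insert, Set.image_insert_eq, Set.insert_eq,
          IntermediateField.adjoin_union]
        rw [sup_comm]
      rw [hLsup]
      have h1 : ℚ⟮t⟯ ≤ K ⊔ ℚ⟮ZZ q⟯ := by
        rw [adjoin_simple_le_iff, ht_eq]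
        exact add_mem (mul_mem (hratmem _ _)
          (SetLike.le_def.1 le_sup_right (mem_adjoin_simple_self ℚ (ZZ q))))
          (SetLike.le_def.1 le_sup_left hcK)
      have h2 : ℚ⟮ZZ q⟯ ≤ K ⊔ ℚ⟮t⟯ := by
        rw [adjoin_simple_le_iff, hζq_eq]
        exact mul_mem (inv_mem (hratmem _ _))
          (sub_mem (SetLike.le_def.1 le_sup_right (mem_adjoin_simple_self ℚ t))
            (SetLike.le_def.1 le_sup_left hcK))
      exact le_antisymm (sup_le le_sup_left h1) (sup_le le_sup_left h2)
    have hmindeg : (minpoly K t).natDegree = q - 1 := by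
      have hrel1 : IntermediateField.relfinrank K L =
          finrank K (IntermediateField.extendScalars hKL) :=
        IntermediateField.relfinrank_eq_finrank_of_le hKL
      have hext : IntermediateField.extendScalars hKL = IntermediateField.adjoin K {t} := by
        apply IntermediateField.restrictScalars_injective ℚ
        erw [IntermediateField.extendScalars_restrictScalars, hLeq]
      have hadj : finrank K (IntermediateField.adjoin K {t}) = (minpoly K t).natDegree :=
        IntermediateField.adjoin.finrank htK
      have htower : finrank ℚ K * IntermediateField.relfinrank K L = finrank ℚ L := by
        rw [← IntermediateField.relfinrank_bot_left K, ← IntermediateField.relfinrank_bot_left L]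
        exact IntermediateField.relfinrank_mul_relfinrank bot_le hKL
      rw [hrel1, hext, hadj] at htower
      have hfr : finrank ℚ L = (q - 1) * finrank ℚ K := by
        rw [hL, hK, finrank_KK _ hprime', finrank_KK _ hSprime, Finset.prod_insert hqS,
          Nat.totient_mul hcop, Nat.totient_prime hq]
      rw [hfr] at htower
      have hKpos : 0 < finrank ℚ K := finrank_pos
      rw [mul_comm (q-1) (finrank ℚ K)] at htower
      exact (Nat.eq_of_mul_eq_mul_left hKpos htower).symm ▸ rfl
    -- polynomial part
    intro haeval
    set q' := MvPolynomial.finSuccEquiv ℚ m g with hq'def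
    have hq'0 : q' ≠ 0 := by
      rw [hq'def, ne_eq, EmbeddingLike.map_eq_zero_iff]
      exact hg
    obtain ⟨k, hk⟩ : ∃ k, q'.coeff k ≠ 0 := by
      by_contra h
      push_neg at h
      exact hq'0 (Polynomial.ext fun n => by simp [h n])
    have hIH : ∀ k, q'.coeff k ≠ 0 → MvPolynomial.aeval (fun i => tb i.succ) (q'.coeff k) ≠ 0 := by
      intro k hk
      apply IH (fun i => p i.succ) (fun i => hp _) (fun i j h => Fin.succ_injective m (hinj h))
        (fun i => hge _) (fun i j => a i.succ j.succ) (fun i => ha i.succ)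
        (fun i => tb i.succ) ?_ _ hk ?_
      · intro i
        show tb i.succ = _
        rw [htb i.succ, Ici_succ_eq i, Finset.sum_map]
        rfl
      · have hbd := MvPolynomial.totalDegree_coeff_finSuccEquiv_add_le g k
          (by rw [← hq'def]; exact hk)
        rw [← hq'def] at hbd
        exact le_trans (le_trans (Nat.le_add_right _ k) hbd) hdeg
    set φ : MvPolynomial (Fin m) ℚ →ₐ[ℚ] K :=
      MvPolynomial.aeval (fun i => (⟨tb i.succ, hmemtb i⟩ : K)) with hφ
    have hcomp : (K.val.comp φ : MvPolynomial (Fin m) ℚ →ₐ[ℚ] ℂ) =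
        MvPolynomial.aeval (fun i => tb i.succ) := by
      apply MvPolynomial.algHom_ext
      intro i
      simp [hφ]
      erw [AlgHom.comp_apply, MvPolynomial.aeval_X]; rfl
    set Q : Polynomial K := q'.map φ.toRingHom with hQ
    have hQcoeff : ∀ n, ((Q.coeff n : K) : ℂ) =
        MvPolynomial.aeval (fun i => tb i.succ) (q'.coeff n) := by
      intro n
      rw [hQ, Polynomial.coeff_map, ← DFunLike.congr_fun hcomp (q'.coeff n)]
      rfl
    have hQne : Q ≠ 0 := by
      intro h0
      apply hIH k hk
      rw [← hQcoeff k, h0, Polynomial.coeff_zero]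
      simp
    have hQdeg : Q.natDegree ≤ D := by
      refine le_trans Polynomial.natDegree_map_le ?_
      rw [hq'def, MvPolynomial.natDegree_finSuccEquiv]
      exact le_trans (MvPolynomial.degreeOf_le_totalDegree g 0) hdeg
    have haevalQ : Polynomial.aeval t Q = 0 := by
      have heval := aeval_finSuccEquiv g tb
      rw [haeval] at heval
      have hmm : (MvPolynomial.aeval (fun i => tb i.succ) :
          MvPolynomial (Fin m) ℚ →ₐ[ℚ] ℂ).toRingHom = (K.val.toRingHom).comp φ.toRingHom := by
        rw [← hcomp]; rfl
      rw [hmm, ← Polynomial.map_map, ← hQ] at heval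
      rw [Polynomial.aeval_def, ← Polynomial.eval_map]
      exact heval.symm
    have hdvd : minpoly K t ∣ Q := minpoly.dvd K t haevalQ
    have hle : (minpoly K t).natDegree ≤ Q.natDegree := Polynomial.natDegree_le_of_dvd hdvd hQne
    rw [hmindeg] at hle
    have hq3 := hge 0
    rw [← hqdef] at hq3
    omega

open Complex in
/-- Let `p_1, …, p_m` be distinct primes with `p_i ≥ D + 3`, `b^i = e^{2πi/p_i}`, and
`b̃^i = ∑_{j ≤ i} a^i_j b^j` with rational coefficients and `a^i_i ≠ 0`.  Then no nonzero
rational polynomial of total degree at most `D` vanishes at `(b̃^1, …, b̃^m)`. -/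
theorem stmt10 (D m : ℕ) (p : Fin m → ℕ) (hp : ∀ i, (p i).Prime)
    (hdist : Function.Injective p) (hge : ∀ i, D + 3 ≤ p i)
    (a : Fin m → Fin m → ℚ) (ha : ∀ i, a i i ≠ 0)
    (tb : Fin m → ℂ)
    (htb : ∀ i, tb i = ∑ j ∈ Finset.Iic i,
      (a i j : ℂ) * Complex.exp (2 * Real.pi * Complex.I / (p j : ℂ)))
    (g : MvPolynomial (Fin m) ℚ) (hg : g ≠ 0) (hdeg : g.totalDegree ≤ D) :
    MvPolynomial.aeval tb g ≠ 0 := by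
  set p' : Fin m → ℕ := fun i => p i.rev with hp'
  set a' : Fin m → Fin m → ℚ := fun i j => a i.rev j.rev with ha'
  set tb' : Fin m → ℂ := fun i => tb i.rev with htb'def
  have htb' : ∀ i, tb' i = ∑ j ∈ Finset.Ici i, (a' i j : ℂ) * ZZ (p' j) := by
    intro i
    show tb i.rev = _
    rw [htb i.rev, sum_Iic_rev]
    rfl
  set g' : MvPolynomial (Fin m) ℚ := MvPolynomial.rename Fin.rev g with hg'def
  have hg' : g' ≠ 0 := fun h => hg (by
    have hinj := MvPolynomial.rename_injective (R := ℚ) (Fin.rev : Fin m → Fin m)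
      Fin.rev_injective
    exact hinj (by rw [← hg'def, h, map_zero]))
  have hdeg' : g'.totalDegree ≤ D := le_trans (MvPolynomial.totalDegree_rename_le _ _) hdeg
  have hmain := main' D m p' (fun i => hp _) (fun i j h => Fin.rev_injective (hdist h))
    (fun i => hge _) a' (fun i => ha _) tb' htb' g' hg' hdeg'
  intro h
  apply hmain
  rw [hg'def, MvPolynomial.aeval_rename]
  have hco : (tb' ∘ Fin.rev) = tb := funext fun j => by
    show tb j.rev.rev = tb j
    rw [Fin.rev_rev]
  rw [hco]
  exact h
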